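/- Let Γ be a simplicial complex with Γ = Δ_d(Γ^{[d]}). If for every subset W of the vertex set of Γ the reduced simplicial homology over ℤ/2ℤ satisfies H̃_d(Γ_W; ℤ/2ℤ) = 0 (as holds whenever the Stanley-Reisner ideal of Γ has a (d+1)-linear resolution over a field of characteristic 2), then the pure d-skeleton Γ^{[d]} is d-chorded. -/

import Mathlib

open Finset

namespace ChordedPaper

variable {V : Type*} [DecidableEq V] [Fintype V]

/-- A simplicial complex: a set of finsets (faces) closed under taking subsets.
(The vertices of the complex are the vertices of its faces, so all singletons of
vertices are automatically faces.) -/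
def IsComplex (K : Set (Finset V)) : Prop :=
  ∀ F ∈ K, ∀ G ⊆ F, G ∈ K

/-- The vertex set `V(K)` of a complex. -/
def verts (K : Set (Finset V)) : Set V :=
  {v | ∃ F ∈ K, v ∈ F}

/-- The `d`-dimensional faces (cardinality `d+1`) of `K`. -/
def dfaces (K : Set (Finset V)) (d : ℕ) : Set (Finset V) :=
  {F | F ∈ K ∧ F.card = d + 1}

/-- `K` is pure `d`-dimensional: every face is contained in a `d`-face. -/
def IsPureD (K : Set (Finset V)) (d : ℕ) : Prop :=
  ∀ F ∈ K, ∃ G ∈ dfaces K d, F ⊆ G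

/-- The complex generated by a set of facets. -/
def gen (S : Set (Finset V)) : Set (Finset V) :=
  {G | ∃ F ∈ S, G ⊆ F}

/-- The pure `d`-skeleton `K^{[d]}`: the complex whose facets are the `d`-faces of `K`. -/
def skel (K : Set (Finset V)) (d : ℕ) : Set (Finset V) :=
  gen (dfaces K d)

/-- The induced subcomplex `K_W` on a set `W` of vertices. -/
def induced (K : Set (Finset V)) (W : Set V) : Set (Finset V) :=
  {F | F ∈ K ∧ ↑F ⊆ W}

/-- Two `d`-faces of `S` are adjacent in a `d`-path if they share `d` vertices. -/
def adj (S : Set (Finset V)) (d : ℕ) (F G : Finset V) : Prop :=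
  F ∈ S ∧ G ∈ S ∧ (F ∩ G).card = d

/-- `d`-path-connectedness: any two `d`-faces are joined by a `d`-path. -/
def PathConn (K : Set (Finset V)) (d : ℕ) : Prop :=
  ∀ F ∈ dfaces K d, ∀ G ∈ dfaces K d, Relation.ReflTransGen (adj (dfaces K d) d) F G

/-- A `d`-dimensional cycle: a pure `d`-dimensional, `d`-path-connected complex in which
every `(d-1)`-face lies in an even number of `d`-faces. -/
def IsCycle (Ω : Set (Finset V)) (d : ℕ) : Prop :=
  IsComplex Ω ∧ IsPureD Ω d ∧ (dfaces Ω d).Nonempty ∧ PathConn Ω d ∧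
    ∀ f ∈ Ω, Finset.card f = d → Even {F | F ∈ dfaces Ω d ∧ f ⊆ F}.ncard

/-- A `d`-dimensional cycle in the complex `Γ`. -/
def CycleIn (Γ Ω : Set (Finset V)) (d : ℕ) : Prop :=
  Ω ⊆ Γ ∧ IsCycle Ω d

/-- Face-minimality: no strict subset of the `d`-faces of `Ω` forms a `d`-dimensional cycle. -/
def FaceMinimal (Ω : Set (Finset V)) (d : ℕ) : Prop :=
  ∀ S : Set (Finset V), S ⊂ dfaces Ω d → ¬ IsCycle (gen S) d

/-- Vertex-minimality of a cycle `Ω` in `Γ`: no `d`-dimensional cycle in `Γ` lies on a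
strict subset of the vertices of `Ω`. -/
def VertexMinimal (Γ Ω : Set (Finset V)) (d : ℕ) : Prop :=
  ∀ Ω', CycleIn Γ Ω' d → ¬ (verts Ω' ⊂ verts Ω)

/-- `d`-completeness: every `(d+1)`-subset of the vertex set is a face. -/
def DComplete (K : Set (Finset V)) (d : ℕ) : Prop :=
  ∀ S : Finset V, ↑S ⊆ verts K → S.card = d + 1 → S ∈ K

/-- A chord set `C` of the `d`-dimensional cycle `Ω` in `Γ`. -/
def ChordSet (Γ Ω : Set (Finset V)) (d : ℕ) (C : Set (Finset V)) : Prop :=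
  C ⊆ dfaces Γ d ∧ (∀ F ∈ C, F ∉ Ω) ∧ (∀ F ∈ C, ↑F ⊆ verts Ω) ∧
    ∃ (n : ℕ) (Ωi : Fin n → Set (Finset V)), 2 ≤ n ∧ (∀ i, IsCycle (Ωi i) d) ∧
      (⋃ i, dfaces (Ωi i) d) = dfaces Ω d ∪ C ∧
      (∀ F ∈ C, Even {i | F ∈ dfaces (Ωi i) d}.ncard) ∧
      (∀ F ∈ dfaces Ω d, Odd {i | F ∈ dfaces (Ωi i) d}.ncard) ∧
      (∀ i, (verts (Ωi i)).ncard < (verts Ω).ncard)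

/-- `Γ` is `d`-chorded: every face-minimal `d`-dimensional cycle in `Γ` that is not
`d`-complete has a chord set in `Γ`. -/
def DChorded (Γ : Set (Finset V)) (d : ℕ) : Prop :=
  ∀ Ω, CycleIn Γ Ω d → FaceMinimal Ω d → ¬ DComplete Ω d → ∃ C, ChordSet Γ Ω d C

/-- `Γ` is `d`-cycle-complete: every vertex-minimal `d`-dimensional cycle in `Γ` is
`d`-complete. -/
def DCycleComplete (Γ : Set (Finset V)) (d : ℕ) : Prop :=
  ∀ Ω, CycleIn Γ Ω d → VertexMinimal Γ Ω d → DComplete Ω d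

/-- The `d`-closure `Δ_d(K)` of the complex `K`, relative to the vertex set `W`:
it contains the faces of `K`, all subsets of `W` of size at most `d`, and every subset
`S` of `W` with `|S| > d+1` all of whose `(d+1)`-subsets are faces of `K`. -/
def closure (W : Set V) (K : Set (Finset V)) (d : ℕ) : Set (Finset V) :=
  K ∪ {S | ↑S ⊆ W ∧ S.card ≤ d} ∪
    {S | ↑S ⊆ W ∧ d + 1 < S.card ∧ ∀ T ⊆ S, T.card = d + 1 → T ∈ K}

/-- A `d`-dimensional tree: a pure `d`-dimensional complex with no `d`-dimensional cycles. -/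
def IsTree (K : Set (Finset V)) (d : ℕ) : Prop :=
  IsComplex K ∧ IsPureD K d ∧ ∀ Ω, ¬ CycleIn K Ω d

/-- The unsigned boundary map on chains (appropriate over rings of characteristic 2):
a face is sent to the sum of the faces obtained by deleting one vertex. -/
noncomputable def ubd {R : Type*} [AddCommMonoid R] (c : Finset V →₀ R) : Finset V →₀ R :=
  c.sum fun F a => F.sum fun v => Finsupp.single (F.erase v) a

/-- The signed (oriented) boundary map on chains, the vertices of each face being listed
in increasing order. -/
noncomputable def sbd [LinearOrder V] {R : Type*} [Ring R] (c : Finset V →₀ R) : Finset V →₀ R :=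
  c.sum fun F a =>
    F.sum fun v => Finsupp.single (F.erase v) ((-1 : R) ^ (F.filter fun w => w < v).card * a)

/-- `c` is an `i`-chain on the complex `K`: it is supported on `i`-faces of `K`. -/
def ChainOn {R : Type*} [Zero R] (K : Set (Finset V)) (i : ℕ) (c : Finset V →₀ R) : Prop :=
  ∀ F ∈ c.support, F ∈ K ∧ F.card = i + 1

/-- Vanishing of the reduced simplicial homology `H̃_i(K; R)` for the unsigned boundary
map (this is reduced simplicial homology when `R` has characteristic 2): every `i`-chain
with vanishing boundary (for `i = 0`, the boundary at the empty face is the augmentation ε)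
is the boundary of an `(i+1)`-chain. -/
def RedHomZeroU (K : Set (Finset V)) (R : Type*) [AddCommMonoid R] (i : ℕ) : Prop :=
  ∀ c : Finset V →₀ R, ChainOn K i c → ubd c = 0 →
    ∃ b : Finset V →₀ R, ChainOn K (i + 1) b ∧ ubd b = c

/-- Vanishing of the reduced simplicial homology `H̃_i(K; R)` (oriented chains). -/
def RedHomZeroS [LinearOrder V] (K : Set (Finset V)) (R : Type*) [Ring R] (i : ℕ) : Prop :=
  ∀ c : Finset V →₀ R, ChainOn K i c → sbd c = 0 →
    ∃ b : Finset V →₀ R, ChainOn K (i + 1) b ∧ sbd b = c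

/-- Orientability of a `d`-dimensional cycle: there is a choice of signs on its `d`-faces
making the resulting ℤ-chain have zero (oriented) boundary. -/
def Orientable [LinearOrder V] (Ω : Set (Finset V)) (d : ℕ) : Prop :=
  ∃ c : Finset V →₀ ℤ, ↑c.support = dfaces Ω d ∧
    (∀ F ∈ c.support, c F = 1 ∨ c F = -1) ∧ sbd c = 0

/-- Orientable-vertex-minimality of a cycle `Ω` in `Γ`: no orientable `d`-dimensional
cycle in `Γ` lies on a strict subset of the vertices of `Ω`. -/
def OrientVertexMinimal [LinearOrder V] (Γ Ω : Set (Finset V)) (d : ℕ) : Prop :=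
  ∀ Ω', CycleIn Γ Ω' d → Orientable Ω' d → ¬ (verts Ω' ⊂ verts Ω)

/-- `Γ` is orientably-`d`-cycle-complete: every orientably-vertex-minimal (orientable)
`d`-dimensional cycle in `Γ` is `d`-complete. -/
def OrientDCycleComplete [LinearOrder V] (Γ : Set (Finset V)) (d : ℕ) : Prop :=
  ∀ Ω, CycleIn Γ Ω d → Orientable Ω d → OrientVertexMinimal Γ Ω d → DComplete Ω d

/-- A minimal non-face of `K`: a subset of the vertex set that is not a face, all of whose
proper subsets are faces. -/
def MinNonFace (K : Set (Finset V)) (S : Finset V) : Prop :=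
  ↑S ⊆ verts K ∧ S ∉ K ∧ ∀ T ⊂ S, T ∈ K

set_option linter.unusedSectionVars false

-- ===== my aux ====

/-- The boundary complex of a simplex: all proper subsets. -/
def bdry (F : Finset V) : Set (Finset V) := {S | S ⊂ F}

lemma dfaces_bdry {F : Finset V} {d : ℕ} (hF : F.card = d + 2) :
    dfaces (bdry F) d = {S | S ⊆ F ∧ S.card = d + 1} := by
  ext S
  constructor
  · rintro ⟨hS, hc⟩; exact ⟨hS.subset, hc⟩
  · rintro ⟨hS, hc⟩
    refine ⟨Finset.ssubset_iff_subset_ne.mpr ⟨hS, ?_⟩, hc⟩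
    rintro rfl; omega

lemma verts_bdry {F : Finset V} (hF : 2 ≤ F.card) : verts (bdry F) = ↑F := by
  ext v
  constructor
  · rintro ⟨G, hG, hv⟩; exact hG.1 hv
  · intro hv
    refine ⟨{v}, ?_, mem_singleton_self v⟩
    refine Finset.ssubset_iff_subset_ne.mpr ⟨singleton_subset_iff.mpr hv, ?_⟩
    intro h; rw [← h] at hF; simp at hF

lemma isCycle_bdry {F : Finset V} {d : ℕ} (hF : F.card = d + 2) : IsCycle (bdry F) d := by
  have hdf : dfaces (bdry F) d = {S | S ⊆ F ∧ S.card = d + 1} := dfaces_bdry hF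
  refine ⟨?_, ?_, ?_, ?_, ?_⟩
  · intro A hA B hB; exact lt_of_le_of_lt hB hA
  · intro S hS
    have hcard : S.card ≤ d + 1 := by
      have := Finset.card_lt_card hS; rw [hF] at this; omega
    obtain ⟨u, hSu, huF, hu⟩ := Finset.exists_subsuperset_card_eq hS.subset hcard (by omega)
    exact ⟨u, by rw [hdf]; exact ⟨huF, hu⟩, hSu⟩
  · obtain ⟨u, _, huF, hu⟩ := Finset.exists_subsuperset_card_eq (n := d + 1)
      (Finset.empty_subset F) (by simp) (by omega)
    exact ⟨u, by rw [hdf]; exact ⟨huF, hu⟩⟩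
  · intro G hG H hH
    rcases eq_or_ne G H with rfl | hne
    · exact Relation.ReflTransGen.refl
    · refine Relation.ReflTransGen.single ⟨hG, hH, ?_⟩
      rw [hdf] at hG hH
      obtain ⟨hG1, hG2⟩ := hG
      obtain ⟨hH1, hH2⟩ := hH
      have hunion : (G ∪ H).card = d + 2 := by
        have h1 : (G ∪ H).card ≤ d + 2 := hF ▸ Finset.card_le_card (union_subset hG1 hH1)
        have h2 : G ⊆ G ∪ H := subset_union_left
        have h3 : d + 1 < (G ∪ H).card := by
          rcases lt_or_eq_of_le (Finset.card_le_card h2) with h | h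
          · omega
          · exfalso
            have hGeq : G = G ∪ H := Finset.eq_of_subset_of_card_le h2 (by omega)
            have hHG : H ⊆ G := hGeq ▸ subset_union_right
            exact hne (Finset.eq_of_subset_of_card_le hHG (by omega)).symm
        omega
      have := Finset.card_inter_add_card_union G H
      omega
  · intro f hf hfc
    -- d-subsets of F lie in exactly two d-faces
    have hfF : f ⊆ F := hf.subset
    have hdiff : (F \ f).card = 2 := by
      rw [Finset.card_sdiff_of_subset hfF]; omega
    obtain ⟨a, b, hab, hFf⟩ := Finset.card_eq_two.mp hdiff
    have ha : a ∈ F \ f := hFf ▸ by simp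
    have hb : b ∈ F \ f := hFf ▸ by simp
    have hset : {G | G ∈ dfaces (bdry F) d ∧ f ⊆ G} = {insert a f, insert b f} := by
      ext G
      simp only [Set.mem_setOf_eq, hdf, Set.mem_insert_iff, Set.mem_singleton_iff]
      constructor
      · rintro ⟨⟨hGF, hGc⟩, hfG⟩
        have : (G \ f).card = 1 := by rw [Finset.card_sdiff_of_subset hfG]; omega
        obtain ⟨x, hx⟩ := Finset.card_eq_one.mp this
        have hxG : x ∈ G \ f := hx ▸ by simp
        have hGeq : G = insert x f := by
          apply Finset.eq_of_subset_of_card_le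
          · intro y hy
            by_cases hyf : y ∈ f
            · exact Finset.mem_insert_of_mem hyf
            · have : y ∈ G \ f := Finset.mem_sdiff.mpr ⟨hy, hyf⟩
              rw [hx] at this
              rw [Finset.mem_singleton.mp this]
              exact Finset.mem_insert_self x f
          · rw [Finset.card_insert_of_notMem (Finset.mem_sdiff.mp hxG).2]; omega
        have hxab : x = a ∨ x = b := by
          have hxF : x ∈ F \ f := Finset.mem_sdiff.mpr
            ⟨hGF (Finset.mem_sdiff.mp hxG).1, (Finset.mem_sdiff.mp hxG).2⟩
          rw [hFf] at hxF
          simpa using hxF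
        rcases hxab with rfl | rfl
        · exact Or.inl hGeq
        · exact Or.inr hGeq
      · rintro (rfl | rfl)
        · have hna : a ∉ f := (Finset.mem_sdiff.mp ha).2
          refine ⟨⟨Finset.insert_subset (Finset.mem_sdiff.mp ha).1 hfF, ?_⟩,
            Finset.subset_insert a f⟩
          rw [Finset.card_insert_of_notMem hna]; omega
        · have hnb : b ∉ f := (Finset.mem_sdiff.mp hb).2
          refine ⟨⟨Finset.insert_subset (Finset.mem_sdiff.mp hb).1 hfF, ?_⟩,
            Finset.subset_insert b f⟩
          rw [Finset.card_insert_of_notMem hnb]; omega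
    rw [hset, Set.ncard_pair]
    · exact ⟨1, rfl⟩
    · intro h
      have : a ∈ insert b f := h ▸ Finset.mem_insert_self a f
      rcases Finset.mem_insert.mp this with h' | h'
      · exact hab h'
      · exact (Finset.mem_sdiff.mp ha).2 h'


-- inner sum evaluation
lemma inner_apply {R : Type*} [AddCommMonoid R] (F G : Finset V) (a : R) {m : ℕ}
    (hF : F.card = m + 1) (hG : G.card = m) :
    (F.sum fun v => Finsupp.single (F.erase v) a) G = if G ⊆ F then a else 0 := by
  classical
  rw [Finsupp.finset_sum_apply]
  by_cases hGF : G ⊆ F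
  · have hd : (F \ G).card = 1 := by rw [Finset.card_sdiff_of_subset hGF]; omega
    obtain ⟨w, hw⟩ := Finset.card_eq_one.mp hd
    have hwF : w ∈ F \ G := hw ▸ Finset.mem_singleton_self w
    rw [if_pos hGF]
    rw [Finset.sum_eq_single_of_mem w (Finset.mem_sdiff.mp hwF).1]
    · have hsub : G ⊆ F.erase w := by
        intro y hy
        exact Finset.mem_erase.mpr ⟨fun h => (Finset.mem_sdiff.mp hwF).2 (h ▸ hy), hGF hy⟩
      have heq : F.erase w = G := by
        refine (Finset.eq_of_subset_of_card_le hsub ?_).symm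
        rw [Finset.card_erase_of_mem (Finset.mem_sdiff.mp hwF).1]; omega
      rw [Finsupp.single_apply, if_pos heq]
    · intro v hvF hvw
      rw [Finsupp.single_apply, if_neg]
      intro h
      by_cases hvG : v ∈ G
      · have : v ∈ F.erase v := h ▸ hvG
        exact (Finset.notMem_erase v F) this
      · have : v ∈ F \ G := Finset.mem_sdiff.mpr ⟨hvF, hvG⟩
        rw [hw] at this
        exact hvw (Finset.mem_singleton.mp this)
  · rw [if_neg hGF]
    apply Finset.sum_eq_zero
    intro v hv
    rw [Finsupp.single_apply, if_neg]
    intro h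
    exact hGF (h ▸ Finset.erase_subset v F)

lemma ubd_apply {R : Type*} [AddCommMonoid R] (b : Finset V →₀ R) {m : ℕ}
    (hb : ∀ F ∈ b.support, F.card = m + 1) (G : Finset V) (hG : G.card = m) :
    ubd b G = ∑ F ∈ b.support, (if G ⊆ F then b F else 0) := by
  classical
  rw [ubd, Finsupp.sum, Finsupp.finset_sum_apply]
  apply Finset.sum_congr rfl
  intro F hF
  rw [inner_apply F G (b F) (hb F hF) hG]

lemma ubd_apply_card (b : Finset V →₀ ZMod 2) {m : ℕ}
    (hb : ∀ F ∈ b.support, F.card = m + 1) (G : Finset V) (hG : G.card = m) :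
    ubd b G = ((b.support.filter fun F => G ⊆ F).card : ZMod 2) := by
  classical
  rw [ubd_apply b hb G hG, ← Finset.sum_filter]
  have : ∀ F ∈ b.support.filter (fun F => G ⊆ F), b F = 1 := by
    intro F hF
    have hF' : F ∈ b.support := Finset.mem_filter.mp hF |>.1
    have hne : b F ≠ 0 := Finsupp.mem_support_iff.mp hF'
    have : ∀ x : ZMod 2, x ≠ 0 → x = 1 := by decide
    exact this _ hne
  rw [Finset.sum_congr rfl this, Finset.sum_const, nsmul_eq_mul, mul_one]

lemma ubd_apply_ne {R : Type*} [AddCommMonoid R] (b : Finset V →₀ R) {m : ℕ}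
    (hb : ∀ F ∈ b.support, F.card = m + 1) (G : Finset V) (hG : G.card ≠ m) :
    ubd b G = 0 := by
  classical
  rw [ubd, Finsupp.sum, Finsupp.finset_sum_apply]
  apply Finset.sum_eq_zero
  intro F hF
  rw [Finsupp.finset_sum_apply]
  apply Finset.sum_eq_zero
  intro v hv
  rw [Finsupp.single_apply, if_neg]
  intro h
  apply hG
  rw [← h, Finset.card_erase_of_mem hv, hb F hF]
  omega



lemma even_iff_cast_zero (n : ℕ) : (n : ZMod 2) = 0 ↔ Even n := by
  rw [ZMod.natCast_eq_zero_iff]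
  exact even_iff_two_dvd.symm

lemma odd_of_cast_one {n : ℕ} (h : (n : ZMod 2) = 1) : Odd n := by
  rw [Nat.not_even_iff_odd.symm, ← even_iff_cast_zero, h]
  decide

lemma skel_subset {Γ : Set (Finset V)} {d : ℕ} (hΓ : IsComplex Γ) : skel Γ d ⊆ Γ := by
  rintro F ⟨G, hG, hFG⟩
  exact hΓ G hG.1 F hFG

lemma dfaces_skel (Γ : Set (Finset V)) (d : ℕ) :
    dfaces (skel Γ d) d = dfaces Γ d := by
  ext F
  constructor
  · rintro ⟨⟨G, hG, hFG⟩, hc⟩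
    have : F = G := Finset.eq_of_subset_of_card_le hFG (hG.2.trans hc.symm).le
    exact this ▸ hG
  · rintro ⟨hF, hc⟩
    exact ⟨⟨F, ⟨hF, hc⟩, subset_refl F⟩, hc⟩

/-- The fundamental chain of a `d`-dimensional cycle over `ZMod 2`. -/
noncomputable def cyc (Ω : Set (Finset V)) (d : ℕ) : Finset V →₀ ZMod 2 :=
  ∑ G ∈ (Set.toFinite (dfaces Ω d)).toFinset, Finsupp.single G 1

open scoped Classical in
lemma cyc_apply (Ω : Set (Finset V)) (d : ℕ) (H : Finset V) :
    cyc Ω d H = if H ∈ dfaces Ω d then 1 else 0 := by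
  classical
  rw [cyc, Finsupp.finset_sum_apply]
  rw [Finset.sum_congr rfl (fun G _ => Finsupp.single_apply)]
  rw [Finset.sum_ite_eq' (Set.toFinite (dfaces Ω d)).toFinset H (fun _ => (1 : ZMod 2))]
  simp [Set.Finite.mem_toFinset, dfaces]
  congr

open scoped Classical in
lemma cyc_support (Ω : Set (Finset V)) (d : ℕ) :
    (cyc Ω d).support = (Set.toFinite (dfaces Ω d)).toFinset := by
  ext H
  rw [Finsupp.mem_support_iff, cyc_apply, Set.Finite.mem_toFinset]
  by_cases h : H ∈ dfaces Ω d <;> simp [h]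

/-- A `d`-dimensional cycle on at most `d + 2` vertices is `d`-complete. -/
lemma small_cycle_complete {Ω : Set (Finset V)} {d : ℕ} (hΩ : IsCycle Ω d)
    (hsmall : (verts Ω).ncard ≤ d + 2) : DComplete Ω d := by
  classical
  obtain ⟨hcplx, hpure, ⟨D, hD⟩, hconn, heven⟩ := hΩ
  have hfin : (verts Ω).Finite := Set.toFinite _
  set Wf : Finset V := hfin.toFinset with hWf
  have hWcard : Wf.card = (verts Ω).ncard := (Set.ncard_eq_toFinset_card _ hfin).symm
  have hDW : D ⊆ Wf := by
    intro v hv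
    rw [hWf, Set.Finite.mem_toFinset]
    exact ⟨D, hD.1, hv⟩
  have hDcard : D.card = d + 1 := hD.2
  have hWge : d + 1 ≤ Wf.card := hDcard ▸ Finset.card_le_card hDW
  intro S hSW hScard
  have hSWf : S ⊆ Wf := by
    intro v hv
    rw [hWf, Set.Finite.mem_toFinset]
    exact hSW hv
  rcases Nat.lt_or_ge Wf.card (d + 2) with hlt | hge
  · -- |W| = d + 1 : only one possible face
    have : S = D := by
      have h1 : S = Wf := Finset.eq_of_subset_of_card_le hSWf (by omega)
      have h2 : D = Wf := Finset.eq_of_subset_of_card_le hDW (by omega)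
      rw [h1, h2]
    exact this ▸ hD.1
  · -- |W| = d + 2
    have hW2 : Wf.card = d + 2 := by omega
    -- every (d+1)-subset of Wf adjacent to a face of Ω is a face of Ω
    have key : ∀ T : Finset V, T ⊆ Wf → T.card = d + 1 → T ∈ dfaces Ω d →
        ∀ T' : Finset V, T' ⊆ Wf → T'.card = d + 1 → T' ∈ dfaces Ω d := by
      intro T hTW hTc hTΩ T' hTW' hTc'
      rcases eq_or_ne T' T with rfl | hne
      · exact hTΩ
      · have hint : (T ∩ T').card = d := by
          have hu : (T ∪ T').card = d + 2 := by
            have h1 : (T ∪ T').card ≤ d + 2 := hW2 ▸ Finset.card_le_card (Finset.union_subset hTW hTW')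
            have h2 : T ⊆ T ∪ T' := Finset.subset_union_left
            rcases Nat.lt_or_ge (d+1) (T ∪ T').card with h | h
            · omega
            · exfalso
              have hTeq : T = T ∪ T' := Finset.eq_of_subset_of_card_le h2 (by omega)
              have hT'T : T' ⊆ T := hTeq ▸ Finset.subset_union_right
              exact hne (Finset.eq_of_subset_of_card_le hT'T (by omega))
          have := Finset.card_inter_add_card_union T T'
          omega
        set f := T ∩ T' with hf
        have hfT : f ⊆ T := Finset.inter_subset_left
        have hfΩ : f ∈ Ω := hcplx T hTΩ.1 f hfT
        have hev := heven f hfΩ hint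
        -- the set of d-faces containing f is a subset of {T, T'}
        have hsub : {F | F ∈ dfaces Ω d ∧ f ⊆ F} ⊆ {T, T'} := by
          rintro F ⟨hFΩ, hfF⟩
          have hFW : F ⊆ Wf := by
            intro v hv
            rw [hWf, Set.Finite.mem_toFinset]
            exact ⟨F, hFΩ.1, hv⟩
          -- F = f ∪ {x} with x ∈ Wf \ f
          have hfc : f.card = d := hint
          have hd1 : (F \ f).card = 1 := by
            rw [Finset.card_sdiff_of_subset hfF, hFΩ.2, hfc]; omega
          obtain ⟨x, hx⟩ := Finset.card_eq_one.mp hd1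
          have hxF : x ∈ F \ f := hx ▸ Finset.mem_singleton_self x
          have hFeq : F = insert x f := by
            apply Finset.eq_of_subset_of_card_le
            · intro y hy
              by_cases hyf : y ∈ f
              · exact Finset.mem_insert_of_mem hyf
              · have : y ∈ F \ f := Finset.mem_sdiff.mpr ⟨hy, hyf⟩
                rw [hx] at this
                rw [Finset.mem_singleton.mp this]
                exact Finset.mem_insert_self x f
            · rw [Finset.card_insert_of_notMem (Finset.mem_sdiff.mp hxF).2, hFΩ.2, hfc]
          -- Wf \ f has two elements: one in T \ f, one in T' \ f
          have hxW : x ∈ Wf \ f := Finset.mem_sdiff.mpr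
            ⟨hFW (Finset.mem_sdiff.mp hxF).1, (Finset.mem_sdiff.mp hxF).2⟩
          have hWfc : (Wf \ f).card = 2 := by
            rw [Finset.card_sdiff_of_subset (hfT.trans hTW), hW2, hint]; omega
          -- T = insert a f, T' = insert b f where Wf \ f = {a, b}
          have hTf : f ⊆ T' := Finset.inter_subset_right
          have haT : (T \ f).card = 1 := by rw [Finset.card_sdiff_of_subset hfT, hTc, hint]; omega
          have hbT : (T' \ f).card = 1 := by rw [Finset.card_sdiff_of_subset hTf, hTc', hint]; omega
          obtain ⟨a, ha⟩ := Finset.card_eq_one.mp haT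
          obtain ⟨b, hb⟩ := Finset.card_eq_one.mp hbT
          have haa : a ∈ T \ f := ha ▸ Finset.mem_singleton_self a
          have hbb : b ∈ T' \ f := hb ▸ Finset.mem_singleton_self b
          have hTeq : T = insert a f := by
            apply Finset.eq_of_subset_of_card_le
            · intro y hy
              by_cases hyf : y ∈ f
              · exact Finset.mem_insert_of_mem hyf
              · have : y ∈ T \ f := Finset.mem_sdiff.mpr ⟨hy, hyf⟩
                rw [ha] at this
                rw [Finset.mem_singleton.mp this]
                exact Finset.mem_insert_self a f
            · rw [Finset.card_insert_of_notMem (Finset.mem_sdiff.mp haa).2, hTc, hint]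
          have hTeq' : T' = insert b f := by
            apply Finset.eq_of_subset_of_card_le
            · intro y hy
              by_cases hyf : y ∈ f
              · exact Finset.mem_insert_of_mem hyf
              · have : y ∈ T' \ f := Finset.mem_sdiff.mpr ⟨hy, hyf⟩
                rw [hb] at this
                rw [Finset.mem_singleton.mp this]
                exact Finset.mem_insert_self b f
            · rw [Finset.card_insert_of_notMem (Finset.mem_sdiff.mp hbb).2, hTc', hint]
          have hane : a ≠ b := by
            intro h
            apply hne
            rw [hTeq', hTeq, h]
          have habW : ({a, b} : Finset V) ⊆ Wf \ f := by
            intro y hy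
            rcases Finset.mem_insert.mp hy with rfl | hy
            · exact Finset.mem_sdiff.mpr ⟨hTW (Finset.mem_sdiff.mp haa).1, (Finset.mem_sdiff.mp haa).2⟩
            · rw [Finset.mem_singleton.mp hy]
              exact Finset.mem_sdiff.mpr ⟨hTW' (Finset.mem_sdiff.mp hbb).1, (Finset.mem_sdiff.mp hbb).2⟩
          have habeq : ({a, b} : Finset V) = Wf \ f := by
            apply Finset.eq_of_subset_of_card_le habW
            rw [hWfc, Finset.card_insert_of_notMem (by simpa using hane), Finset.card_singleton]
          have : x ∈ ({a, b} : Finset V) := habeq ▸ hxW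
          rcases Finset.mem_insert.mp this with rfl | hxb
          · left; rw [hFeq, hTeq]
          · right
            rw [hFeq, hTeq', Finset.mem_singleton.mp hxb]
            exact rfl
        -- T is in the set; by evenness T' must be too
        by_contra hT'
        have heq : {F | F ∈ dfaces Ω d ∧ f ⊆ F} = {T} := by
          apply Set.Subset.antisymm
          · intro F hF
            rcases Set.mem_insert_iff.mp (hsub hF) with h | h
            · exact h
            · exact absurd ((Set.mem_singleton_iff.mp h) ▸ hF.1) hT'
          · intro F hF
            rw [Set.mem_singleton_iff] at hF
            exact hF ▸ ⟨hTΩ, hfT⟩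
        rw [heq, Set.ncard_singleton] at hev
        exact Nat.not_even_one hev
    -- apply to D and S
    have hDΩ : D ∈ dfaces Ω d := hD
    exact (key D hDW hDcard hDΩ S hSWf hScard).1

/-- Theorem 6.1.2: if `Γ = Δ_d(Γ^{[d]})` and every induced subcomplex of
`Γ` has vanishing reduced homology `H̃_d(Γ_W; ℤ/2ℤ) = 0` (as holds when the
Stanley–Reisner ideal of `Γ` has a `(d+1)`-linear resolution over a field of
characteristic 2), then `Γ^{[d]}` is `d`-chorded. -/
theorem homology_vanishing_dChorded {V : Type*} [DecidableEq V] [Fintype V]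
    (Γ : Set (Finset V)) (d : ℕ) (hcomplex : IsComplex Γ)
    (hcl : Γ = closure (verts Γ) (skel Γ d) d)
    (hhom : ∀ W : Set V, RedHomZeroU (induced Γ W) (ZMod 2) d) :
    DChorded (skel Γ d) d := by
  classical
  intro Ω hΩin hmin hncomp
  obtain ⟨hΩskel, hΩcyc⟩ := hΩin
  obtain ⟨hΩcplx, hΩpure, hΩne, hΩconn, hΩeven⟩ := hΩcyc
  have hskelΓ : skel Γ d ⊆ Γ := skel_subset hcomplex
  have hΩΓ : Ω ⊆ Γ := fun F hF => hskelΓ (hΩskel hF)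
  set W := verts Ω with hW
  set c := cyc Ω d with hc
  have hcsupp : ∀ F, F ∈ c.support ↔ F ∈ dfaces Ω d := by
    intro F; rw [hc, cyc_support, Set.Finite.mem_toFinset]
  have hchain : ChainOn (induced Γ W) d c := by
    intro F hF
    rw [hcsupp] at hF
    exact ⟨⟨hΩΓ hF.1, fun v hv => ⟨F, hF.1, hv⟩⟩, hF.2⟩
  have hbd : ubd c = 0 := by
    ext g
    rw [Finsupp.coe_zero, Pi.zero_apply]
    rcases eq_or_ne g.card d with hg | hg
    · rw [ubd_apply_card c (fun F hF => ((hcsupp F).mp hF).2) g hg]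
      refine (even_iff_cast_zero _).mpr ?_
      rcases Finset.eq_empty_or_nonempty (c.support.filter fun F => g ⊆ F) with he | ⟨F0, hF0⟩
      · rw [he]; simp
      · have hF0' := Finset.mem_filter.mp hF0
        have hgΩ : g ∈ Ω := hΩcplx F0 ((hcsupp F0).mp hF0'.1).1 g hF0'.2
        have hev := hΩeven g hgΩ hg
        have hseteq : {F | F ∈ dfaces Ω d ∧ g ⊆ F} =
            ↑(c.support.filter fun F => g ⊆ F) := by
          ext F
          simp only [Set.mem_setOf_eq, Finset.coe_filter, Finset.mem_coe, hcsupp]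
        rw [hseteq, Set.ncard_coe_finset] at hev
        exact hev
    · exact ubd_apply_ne c (fun F hF => ((hcsupp F).mp hF).2) g hg
  obtain ⟨b, hbchain, hbc⟩ := hhom W c hchain hbd
  have hcoef : ∀ G : Finset V, G.card = d + 1 →
      ((b.support.filter fun F => G ⊆ F).card : ZMod 2) = c G := by
    intro G hG
    rw [← ubd_apply_card b (fun F hF => (hbchain F hF).2) G hG, hbc]
  have hWge : d + 3 ≤ W.ncard := by
    by_contra h
    push_neg at h
    exact hncomp (small_cycle_complete ⟨hΩcplx, hΩpure, hΩne, hΩconn, hΩeven⟩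
      (by rw [← hW]; omega))
  have hodd : ∀ G ∈ dfaces Ω d, Odd ((b.support.filter fun F => G ⊆ F).card) := by
    intro G hG
    apply odd_of_cast_one
    rw [hcoef G hG.2, hc, cyc_apply, if_pos hG]
  set n := b.support.card with hn
  set e : Fin n → Finset V := fun i => ((b.support.equivFin.symm i : {x // x ∈ b.support}) : Finset V) with he
  have hemem : ∀ i, e i ∈ b.support := fun i => (b.support.equivFin.symm i).2
  have hecard : ∀ i, (e i).card = d + 2 := fun i => (hbchain _ (hemem i)).2
  have heΓ : ∀ i, e i ∈ Γ := fun i => (hbchain _ (hemem i)).1.1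
  have heW : ∀ i, ↑(e i) ⊆ W := fun i => (hbchain _ (hemem i)).1.2
  have hesurj : ∀ F ∈ b.support, ∃ i, e i = F := by
    intro F hF
    exact ⟨b.support.equivFin ⟨F, hF⟩, by rw [he]; simp⟩
  set Ωi : Fin n → Set (Finset V) := fun i => bdry (e i) with hΩi
  have hdfi : ∀ i, dfaces (Ωi i) d = {S | S ⊆ e i ∧ S.card = d + 1} :=
    fun i => dfaces_bdry (hecard i)
  have hcount : ∀ G : Finset V, G.card = d + 1 →
      {i | G ∈ dfaces (Ωi i) d}.ncard = (b.support.filter fun F => G ⊆ F).card := by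
    intro G hG
    have hseteq : {i | G ∈ dfaces (Ωi i) d} =
        ↑(Finset.univ.filter fun i => G ⊆ e i) := by
      ext i
      simp only [Set.mem_setOf_eq, hdfi i, Finset.coe_filter, Finset.mem_univ, true_and, hG,
        and_true]
    rw [hseteq, Set.ncard_coe_finset]
    apply Finset.card_bij (fun i _ => e i)
    · intro i hi
      exact Finset.mem_filter.mpr ⟨hemem i, (Finset.mem_filter.mp hi).2⟩
    · intro i1 h1 i2 h2 heq
      have : b.support.equivFin.symm i1 = b.support.equivFin.symm i2 := Subtype.ext heq
      exact b.support.equivFin.symm.injective this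
    · intro F hF
      have hFs := Finset.mem_filter.mp hF
      obtain ⟨i, hi⟩ := hesurj F hFs.1
      exact ⟨i, Finset.mem_filter.mpr ⟨Finset.mem_univ _, hi ▸ hFs.2⟩, hi⟩
  have hn2 : 2 ≤ n := by
    by_contra h
    push_neg at h
    obtain ⟨D, hD⟩ := hΩne
    have h1 := hodd D hD
    have hle : (b.support.filter fun F => D ⊆ F).card ≤ n :=
      Finset.card_le_card (Finset.filter_subset _ _)
    have hn1 : n = 1 := by rcases h1 with ⟨k, hk⟩; omega
    obtain ⟨F0, hF0⟩ := Finset.card_eq_one.mp hn1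
    have hsubW : W ⊆ ↑F0 := by
      intro v hv
      obtain ⟨A, hA, hvA⟩ := hv
      obtain ⟨G, hG, hAG⟩ := hΩpure A hA
      have hGodd := hodd G hG
      have hGne : (b.support.filter fun F => G ⊆ F).Nonempty := by
        rw [← Finset.card_pos]; rcases hGodd with ⟨k, hk⟩; omega
      obtain ⟨F1, hF1⟩ := hGne
      have hF1s := Finset.mem_filter.mp hF1
      have hF10 : F1 = F0 := by
        have h2 := hF1s.1; rw [hF0] at h2; exact Finset.mem_singleton.mp h2
      exact Finset.mem_coe.mpr (hF10 ▸ hF1s.2 (hAG hvA))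
    have hcon : W.ncard ≤ d + 2 := by
      calc W.ncard ≤ (↑F0 : Set V).ncard := Set.ncard_le_ncard hsubW (Set.toFinite _)
      _ = F0.card := Set.ncard_coe_finset F0
      _ = d + 2 := (hbchain F0 (by rw [hF0]; exact Finset.mem_singleton_self F0)).2
    omega
  set C : Set (Finset V) := (⋃ i, dfaces (Ωi i) d) \ dfaces Ω d with hC
  have hCcard : ∀ F ∈ C, F.card = d + 1 ∧ ∃ i, F ⊆ e i := by
    rintro F ⟨hFu, _⟩
    obtain ⟨i, hi⟩ := Set.mem_iUnion.mp hFu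
    rw [hdfi i] at hi
    exact ⟨hi.2, i, hi.1⟩
  refine ⟨C, ?_, ?_, ?_, n, Ωi, hn2, fun i => isCycle_bdry (hecard i), ?_, ?_, ?_, ?_⟩
  · -- C ⊆ dfaces (skel Γ d) d
    rw [dfaces_skel]
    intro F hF
    obtain ⟨hFc, i, hFi⟩ := hCcard F hF
    exact ⟨hcomplex (e i) (heΓ i) F hFi, hFc⟩
  · -- F ∉ Ω
    rintro F ⟨_, hFn⟩ hFΩ
    obtain ⟨hFc, _⟩ := hCcard F ⟨by assumption, hFn⟩
    exact hFn ⟨hFΩ, hFc⟩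
  · -- vertices of C in verts Ω
    intro F hF
    obtain ⟨_, i, hFi⟩ := hCcard F hF
    exact fun v hv => heW i (hFi hv)
  · -- union equality
    apply Set.Subset.antisymm
    · intro F hF
      by_cases hFΩ : F ∈ dfaces Ω d
      · exact Or.inl hFΩ
      · exact Or.inr ⟨hF, hFΩ⟩
    · rintro F (hFΩ | hFC)
      · have hGne : (b.support.filter fun F' => F ⊆ F').Nonempty := by
          rw [← Finset.card_pos]; rcases hodd F hFΩ with ⟨k, hk⟩; omega
        obtain ⟨F1, hF1⟩ := hGne
        have hF1s := Finset.mem_filter.mp hF1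
        obtain ⟨i, hi⟩ := hesurj F1 hF1s.1
        refine Set.mem_iUnion.mpr ⟨i, ?_⟩
        rw [hdfi i]
        exact ⟨hi ▸ hF1s.2, hFΩ.2⟩
      · exact hFC.1
  · -- evenness on C
    intro F hF
    obtain ⟨hFc, _⟩ := hCcard F hF
    rw [hcount F hFc]
    refine (even_iff_cast_zero _).mp ?_
    rw [hcoef F hFc, hc, cyc_apply, if_neg hF.2]
  · -- oddness on faces of Ω
    intro F hFΩ
    rw [hcount F hFΩ.2]
    apply odd_of_cast_one
    rw [hcoef F hFΩ.2, hc, cyc_apply, if_pos hFΩ]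
  · -- vertex counts
    intro i
    have hv : verts (Ωi i) = ↑(e i) := verts_bdry (by rw [hecard i]; omega)
    rw [hv, Set.ncard_coe_finset, hecard i, ← hW]
    omega


end ChordedPaper
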